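/- Let S and r be parameters with 0 < S < 4r, and let u₀ be the standing wave. There is no twice continuously differentiable function h : ℝ → ℝ with h and h' bounded such that (Lh)(x) = u₀'(x) for all x ∈ ℝ. -/

import Mathlib

open Real Filter Topology

noncomputable def fpoly (u : ℝ) : ℝ := u * (2 * u - 1) * (1 - u)

noncomputable def Lop (S r : ℝ) (u₀ h : ℝ → ℝ) : ℝ → ℝ := fun x =>
  deriv (deriv h) x + (4 * S / r) * deriv u₀ x * (2 * u₀ x - 1) * deriv h x
    + S * (deriv fpoly (u₀ x) + (4 / r) * (deriv u₀ x) ^ 2) * h x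

lemma fpoly_hasDerivAt (u : ℝ) :
    HasDerivAt fpoly (-6 * u ^ 2 + 6 * u - 1) u := by
  have h : HasDerivAt (fun v : ℝ => v * (2 * v - 1) * (1 - v))
      ((1 * (2 * u - 1) + u * (2 * 1)) * (1 - u) + u * (2 * u - 1) * (0 - 1)) u :=
    (((hasDerivAt_id u).mul (((hasDerivAt_id u).const_mul 2).sub_const 1)).mul
      ((hasDerivAt_const u 1).sub (hasDerivAt_id u)))
  have : fpoly = fun v : ℝ => v * (2 * v - 1) * (1 - v) := rfl
  rw [this]
  convert h using 1
  ring

lemma deriv_fpoly (u : ℝ) : deriv fpoly u = -6 * u ^ 2 + 6 * u - 1 :=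
  (fpoly_hasDerivAt u).deriv

lemma deriv_nonpos_of_strictAnti {f : ℝ → ℝ} (hf : Differentiable ℝ f)
    (h : StrictAnti f) (x : ℝ) : deriv f x ≤ 0 := by
  have hd := (hf x).hasDerivAt
  rw [hasDerivAt_iff_tendsto_slope] at hd
  have hd' : Tendsto (slope f x) (𝓝[>] x) (𝓝 (deriv f x)) :=
    hd.mono_left (nhdsWithin_mono x (fun y hy => ne_of_gt hy))
  refine le_of_tendsto hd' ?_
  filter_upwards [self_mem_nhdsWithin] with y hy
  rw [slope_def_field]
  have h1 : f y < f x := h hy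
  have h2 : (0:ℝ) < y - x := sub_pos.mpr hy
  have := div_nonpos_of_nonpos_of_nonneg (by linarith : f y - f x ≤ 0) h2.le
  simpa [div_eq_iff] using this

lemma aux_p_tendsto (S r : ℝ) (hS : 0 < S) (hr : 0 < r) (u₀ : ℝ → ℝ)
    (hdu : Differentiable ℝ u₀) (hdp : Differentiable ℝ (deriv u₀))
    (hode : ∀ x : ℝ, deriv (deriv u₀) x + S * fpoly (u₀ x)
      + (2 * S / r) * (2 * u₀ x - 1) * (deriv u₀ x) ^ 2 = 0)
    (hbound : ∀ x : ℝ, 0 < u₀ x ∧ u₀ x < 1)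
    (hanti : ∀ x : ℝ, deriv u₀ x ≤ 0)
    (hlim1 : Tendsto u₀ atBot (𝓝 1)) (hlim0 : Tendsto u₀ atTop (𝓝 0)) :
    Tendsto (deriv u₀) atTop (𝓝 0) ∧ Tendsto (deriv u₀) atBot (𝓝 0) := by
  set p := deriv u₀ with hp
  have hu' : ∀ x, HasDerivAt u₀ (p x) x := fun x => (hdu x).hasDerivAt
  have hp' : ∀ x, HasDerivAt p (deriv p x) x := fun x => (hdp x).hasDerivAt
  -- the integrand
  set G : ℝ → ℝ := fun t => S * Real.exp (2 * ((2 * S / r) * (t ^ 2 - t))) * fpoly t with hG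
  have hGc : Continuous G := by
    apply Continuous.mul
    · exact continuous_const.mul (Real.continuous_exp.comp (by continuity))
    · unfold fpoly; continuity
  set F : ℝ → ℝ := fun u => ∫ t in (0:ℝ)..u, G t with hF
  have hFd : ∀ u, HasDerivAt F (G u) u := fun u =>
    intervalIntegral.integral_hasDerivAt_right (hGc.intervalIntegrable _ _)
      (hGc.stronglyMeasurableAtFilter _ _) hGc.continuousAt
  set q : ℝ → ℝ := fun x =>
    (Real.exp ((2 * S / r) * ((u₀ x) ^ 2 - u₀ x)) * p x) ^ 2 / 2 + F (u₀ x) with hq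
  have hqd : ∀ x, HasDerivAt q 0 x := by
    intro x
    have ha : HasDerivAt (fun y => (2 * S / r) * ((u₀ y) ^ 2 - u₀ y))
        ((2 * S / r) * (2 * u₀ x ^ 1 * p x - p x)) x :=
      (((hu' x).pow 2).sub (hu' x)).const_mul _
    have hw : HasDerivAt (fun y => Real.exp ((2 * S / r) * ((u₀ y) ^ 2 - u₀ y)))
        (Real.exp ((2 * S / r) * ((u₀ x) ^ 2 - u₀ x)) * ((2 * S / r) * (2 * u₀ x ^ 1 * p x - p x))) x :=
      ha.exp
    have hwp := hw.mul (hp' x)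
    have hsq := (hwp.pow 2).div_const 2
    have hcomp : HasDerivAt (fun y => F (u₀ y)) (G (u₀ x) * p x) x :=
      (hFd (u₀ x)).comp x (hu' x)
    have htot := hsq.add hcomp
    refine htot.congr_deriv ?_
    have he : Real.exp (2 * ((2 * S / r) * ((u₀ x) ^ 2 - u₀ x)))
        = Real.exp ((2 * S / r) * ((u₀ x) ^ 2 - u₀ x)) ^ 2 := by
      conv_rhs => rw [pow_two]
      rw [← Real.exp_add, ← two_mul]
    simp only [G, he, Pi.mul_apply]
    have h2 := hode x
    simp only [fpoly] at h2 ⊢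
    linear_combination ((Real.exp ((2 * S / r) * ((u₀ x) ^ 2 - u₀ x)) ^ 2) * p x) * h2
  have hqc : ∀ x, q x = q 0 := fun x =>
    is_const_of_deriv_eq_zero (fun y => (hqd y).differentiableAt)
      (fun y => (hqd y).deriv) x 0
  have hFdiff : Differentiable ℝ F := fun u => (hFd u).differentiableAt
  have key : ∀ (l : Filter ℝ), l.NeBot → ∀ (v : ℝ), Tendsto u₀ l (𝓝 v) →
      (2 * S / r) * (v ^ 2 - v) = 0 →
      Tendsto (fun x => (p x) ^ 2) l (𝓝 (2 * q 0 - 2 * F v)) := by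
    intro l hl v hv hv0
    have hFu : Tendsto (fun x => F (u₀ x)) l (𝓝 (F v)) :=
      ((hFdiff v).continuousAt.tendsto).comp hv
    have hwv : Tendsto (fun x => Real.exp ((2 * S / r) * ((u₀ x) ^ 2 - u₀ x))) l (𝓝 1) := by
      have h1 : Tendsto (fun x => (2 * S / r) * ((u₀ x) ^ 2 - u₀ x)) l
          (𝓝 ((2 * S / r) * (v ^ 2 - v))) := ((hv.pow 2).sub hv).const_mul _
      rw [hv0] at h1
      have h2 := (Real.continuous_exp.tendsto 0).comp h1
      simpa [Function.comp_def] using h2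
    have hsql : Tendsto (fun x => (Real.exp ((2 * S / r) * ((u₀ x) ^ 2 - u₀ x)) * p x) ^ 2) l
        (𝓝 (2 * q 0 - 2 * F v)) := by
      have h2 : Tendsto (fun x => 2 * q 0 - 2 * F (u₀ x)) l (𝓝 (2 * q 0 - 2 * F v)) :=
        tendsto_const_nhds.sub (hFu.const_mul 2)
      refine h2.congr (fun x => ?_)
      have h3 : (Real.exp ((2 * S / r) * ((u₀ x) ^ 2 - u₀ x)) * p x) ^ 2 / 2 + F (u₀ x) = q 0 :=
        hqc x
      linarith
    have hdiv := hsql.div (hwv.pow 2) (by norm_num)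
    have heq : ∀ x, (Real.exp ((2 * S / r) * ((u₀ x) ^ 2 - u₀ x)) * p x) ^ 2
        / (Real.exp ((2 * S / r) * ((u₀ x) ^ 2 - u₀ x))) ^ 2 = (p x) ^ 2 := by
      intro x
      rw [mul_pow, mul_comm, mul_div_assoc,
        div_self (pow_ne_zero _ (Real.exp_ne_zero _)), mul_one]
    have := hdiv.congr heq
    simpa using this
  constructor
  · -- atTop
    have hk := key atTop atTop_neBot 0 hlim0 (by ring)
    set k := 2 * q 0 - 2 * F 0 with hkdef
    have hk0 : 0 ≤ k := ge_of_tendsto hk (Eventually.of_forall fun x => sq_nonneg _)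
    have hkz : k = 0 := by
      by_contra hne
      have hkpos : 0 < k := lt_of_le_of_ne hk0 (Ne.symm hne)
      have hev : ∀ᶠ x in atTop, k / 2 < (p x) ^ 2 :=
        hk.eventually (lt_mem_nhds (by linarith))
      obtain ⟨T, hT⟩ := eventually_atTop.mp hev
      set s := Real.sqrt (k / 2) with hsdef
      have hs : 0 < s := Real.sqrt_pos.mpr (by linarith)
      have hps : ∀ x, T ≤ x → p x ≤ -s := by
        intro x hx
        have h1 : s ≤ |p x| := by
          rw [← Real.sqrt_sq_eq_abs]
          exact Real.sqrt_le_sqrt (le_of_lt (hT x hx))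
        rw [abs_of_nonpos (hanti x)] at h1
        linarith
      set X := T + (u₀ T + 1) / s with hXdef
      have hbT := (hbound T).1
      have hTX : T < X := by
        have : 0 < (u₀ T + 1) / s := div_pos (by linarith) hs
        simp only [hXdef]; linarith
      obtain ⟨c, hc, hslope⟩ := exists_deriv_eq_slope u₀ hTX
        (hdu.continuous.continuousOn) (hdu.differentiableOn)
      have hpc : p c ≤ -s := hps c (le_of_lt hc.1)
      rw [eq_div_iff (by linarith : X - T ≠ 0)] at hslope
      have h3 : p c * (X - T) ≤ -s * (X - T) :=
        mul_le_mul_of_nonneg_right hpc (by linarith)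
      have h4 : -s * (X - T) = -(u₀ T + 1) := by
        have : X - T = (u₀ T + 1) / s := by simp [hXdef]
        rw [this]; field_simp
      have hbX := (hbound X).1
      rw [← hp] at hslope
      linarith
    rw [hkz] at hk
    have habs : Tendsto (fun x => Real.sqrt ((p x) ^ 2)) atTop (𝓝 0) := by
      have h2 := (Real.continuous_sqrt.tendsto 0).comp hk
      simpa [Function.comp_def] using h2
    exact squeeze_zero_norm (fun x => by
      rw [Real.norm_eq_abs, ← Real.sqrt_sq_eq_abs]) habs
  · -- atBot
    have hk := key atBot atBot_neBot 1 hlim1 (by ring)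
    set k := 2 * q 0 - 2 * F 1 with hkdef
    have hk0 : 0 ≤ k := ge_of_tendsto hk (Eventually.of_forall fun x => sq_nonneg _)
    have hkz : k = 0 := by
      by_contra hne
      have hkpos : 0 < k := lt_of_le_of_ne hk0 (Ne.symm hne)
      have hev : ∀ᶠ x in atBot, k / 2 < (p x) ^ 2 :=
        hk.eventually (lt_mem_nhds (by linarith))
      obtain ⟨T, hT⟩ := eventually_atBot.mp hev
      set s := Real.sqrt (k / 2) with hsdef
      have hs : 0 < s := Real.sqrt_pos.mpr (by linarith)
      have hps : ∀ x, x ≤ T → p x ≤ -s := by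
        intro x hx
        have h1 : s ≤ |p x| := by
          rw [← Real.sqrt_sq_eq_abs]
          exact Real.sqrt_le_sqrt (le_of_lt (hT x hx))
        rw [abs_of_nonpos (hanti x)] at h1
        linarith
      set X := T - (2 - u₀ T) / s with hXdef
      have hbT := (hbound T).2
      have hXT : X < T := by
        have : 0 < (2 - u₀ T) / s := div_pos (by linarith) hs
        simp only [hXdef]; linarith
      obtain ⟨c, hc, hslope⟩ := exists_deriv_eq_slope u₀ hXT
        (hdu.continuous.continuousOn) (hdu.differentiableOn)
      have hpc : p c ≤ -s := hps c (le_of_lt hc.2)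
      rw [eq_div_iff (by linarith : T - X ≠ 0)] at hslope
      have h3 : p c * (T - X) ≤ -s * (T - X) :=
        mul_le_mul_of_nonneg_right hpc (by linarith)
      have h4 : -s * (T - X) = -(2 - u₀ T) := by
        have : T - X = (2 - u₀ T) / s := by simp [hXdef]
        rw [this]; field_simp
      have hbX := (hbound X).2
      rw [← hp] at hslope
      linarith
    rw [hkz] at hk
    have habs : Tendsto (fun x => Real.sqrt ((p x) ^ 2)) atBot (𝓝 0) := by
      have h2 := (Real.continuous_sqrt.tendsto 0).comp hk
      simpa [Function.comp_def] using h2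
    exact squeeze_zero_norm (fun x => by
      rw [Real.norm_eq_abs, ← Real.sqrt_sq_eq_abs]) habs

theorem uzero_prime_not_in_range (S r : ℝ) (hS : 0 < S) (hSr : S < 4 * r)
    (u₀ : ℝ → ℝ) (hu : ContDiff ℝ 2 u₀)
    (hode : ∀ x : ℝ, deriv (deriv u₀) x + S * fpoly (u₀ x)
      + (2 * S / r) * (2 * u₀ x - 1) * (deriv u₀ x) ^ 2 = 0)
    (hlim1 : Tendsto u₀ atBot (𝓝 1)) (hlim0 : Tendsto u₀ atTop (𝓝 0))
    (hnorm : u₀ 0 = 1 / 2) (hmono : StrictAnti u₀)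
    (hbound : ∀ x : ℝ, 0 < u₀ x ∧ u₀ x < 1) :
    ¬ ∃ h : ℝ → ℝ, ContDiff ℝ 2 h ∧ (∃ M : ℝ, ∀ x : ℝ, |h x| ≤ M) ∧
      (∃ M' : ℝ, ∀ x : ℝ, |deriv h x| ≤ M') ∧
      ∀ x : ℝ, Lop S r u₀ h x = deriv u₀ x := by
  rintro ⟨h, hh, ⟨M, hM⟩, ⟨M', hM'⟩, hL⟩
  have hr : 0 < r := by linarith
  -- differentiability bookkeeping
  have hu2 : ContDiff ℝ ((1 : ℕ) + 1) u₀ := by convert hu using 2; norm_num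
  have hu' := (contDiff_succ_iff_deriv).mp hu2
  have hdu : Differentiable ℝ u₀ := hu'.1
  have hdp : Differentiable ℝ (deriv u₀) := (hu'.2.2).differentiable (by norm_num)
  have hh2 : ContDiff ℝ ((1 : ℕ) + 1) h := by convert hh using 2; norm_num
  have hh' := (contDiff_succ_iff_deriv).mp hh2
  have hdh : Differentiable ℝ h := hh'.1
  have hdh1 : Differentiable ℝ (deriv h) := (hh'.2.2).differentiable (by norm_num)
  set p := deriv u₀ with hp
  set p2 := deriv p with hp2def
  set h1 := deriv h with hh1def
  set h2 := deriv h1 with hh2def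
  have hanti : ∀ x, p x ≤ 0 := fun x => deriv_nonpos_of_strictAnti hdu hmono x
  obtain ⟨htop, hbot⟩ := aux_p_tendsto S r hS hr u₀ hdu hdp hode hbound hanti hlim1 hlim0
  have huD : ∀ x, HasDerivAt u₀ (p x) x := fun x => (hdu x).hasDerivAt
  have hpD : ∀ x, HasDerivAt p (p2 x) x := fun x => (hdp x).hasDerivAt
  have hp2eq : ∀ x, p2 x = -(S * fpoly (u₀ x)) - (2 * S / r) * (2 * u₀ x - 1) * (p x) ^ 2 :=
    fun x => by have := hode x; linarith
  have hfpolyc : Continuous fpoly := by unfold fpoly; continuity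
  -- limits of p2
  have hp2top : Tendsto p2 atTop (𝓝 0) := by
    have h1' : Tendsto (fun x => -(S * fpoly (u₀ x)) - (2 * S / r) * ((2 * u₀ x - 1) * (p x) ^ 2))
        atTop (𝓝 (-(S * fpoly 0) - (2 * S / r) * ((2 * 0 - 1) * (0 : ℝ) ^ 2))) :=
      (((hfpolyc.tendsto 0).comp hlim0).const_mul S).neg.sub
        ((((hlim0.const_mul 2).sub_const 1).mul (htop.pow 2)).const_mul _)
    have hps : ∀ x, (-(S * fpoly (u₀ x)) - (2 * S / r) * ((2 * u₀ x - 1) * (p x) ^ 2)) = p2 x :=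
      fun x => by rw [hp2eq x]; ring
    have h2' := h1'.congr hps
    have : (-(S * fpoly 0) - (2 * S / r) * ((2 * 0 - 1) * (0 : ℝ) ^ 2)) = 0 := by
      simp [fpoly]
    rwa [this] at h2'
  have hp2bot : Tendsto p2 atBot (𝓝 0) := by
    have h1' : Tendsto (fun x => -(S * fpoly (u₀ x)) - (2 * S / r) * ((2 * u₀ x - 1) * (p x) ^ 2))
        atBot (𝓝 (-(S * fpoly 1) - (2 * S / r) * ((2 * 1 - 1) * (0 : ℝ) ^ 2))) :=
      (((hfpolyc.tendsto 1).comp hlim1).const_mul S).neg.sub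
        ((((hlim1.const_mul 2).sub_const 1).mul (hbot.pow 2)).const_mul _)
    have hps : ∀ x, (-(S * fpoly (u₀ x)) - (2 * S / r) * ((2 * u₀ x - 1) * (p x) ^ 2)) = p2 x :=
      fun x => by rw [hp2eq x]; ring
    have h2' := h1'.congr hps
    have : (-(S * fpoly 1) - (2 * S / r) * ((2 * 1 - 1) * (0 : ℝ) ^ 2)) = 0 := by
      simp [fpoly]
    rwa [this] at h2'
  -- third derivative of u₀
  have hp2fun : ∀ y, p2 y = -(S * fpoly (u₀ y)) - (2 * S / r) * ((2 * u₀ y - 1) * (p y) ^ 2) :=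
    fun y => by rw [hp2eq y]; ring
  have hp2D : ∀ x, HasDerivAt p2
      (-(S * ((-6 * (u₀ x) ^ 2 + 6 * u₀ x - 1) * p x))
        - (2 * S / r) * ((2 * p x) * (p x) ^ 2 + (2 * u₀ x - 1) * (2 * p x ^ 1 * p2 x))) x := by
    intro x
    have hc1 : HasDerivAt (fun y => fpoly (u₀ y)) ((-6 * (u₀ x) ^ 2 + 6 * u₀ x - 1) * p x) x :=
      (fpoly_hasDerivAt (u₀ x)).comp x (huD x)
    have hc2 : HasDerivAt (fun y => (2 * u₀ y - 1) * (p y) ^ 2)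
        ((2 * p x) * (p x) ^ 2 + (2 * u₀ x - 1) * (↑2 * p x ^ 1 * p2 x)) x :=
      (((huD x).const_mul 2).sub_const 1).mul ((hpD x).pow 2)
    have hcomb := ((hc1.const_mul S).neg).sub (hc2.const_mul (2 * S / r))
    have hgoal : HasDerivAt
        (fun y => -(S * fpoly (u₀ y)) - (2 * S / r) * ((2 * u₀ y - 1) * (p y) ^ 2))
        (-(S * ((-6 * (u₀ x) ^ 2 + 6 * u₀ x - 1) * p x))
          - (2 * S / r) * ((2 * p x) * (p x) ^ 2 + (2 * u₀ x - 1) * (2 * p x ^ 1 * p2 x))) x := by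
      refine hcomb.congr_deriv ?_
      push_cast; ring
    exact hgoal.congr_of_eventuallyEq (Filter.Eventually.of_forall hp2fun)
  -- the Wronskian-type function
  set w : ℝ → ℝ := fun x => Real.exp ((4 * S / r) * ((u₀ x) ^ 2 - u₀ x)) with hwdef
  set A : ℝ → ℝ := fun x => p x * h1 x - p2 x * h x with hAdef
  set W : ℝ → ℝ := fun x => w x * A x with hWdef
  have hWD : ∀ x, HasDerivAt W (w x * (p x) ^ 2) x := by
    intro x
    have hwa : HasDerivAt (fun y => (4 * S / r) * ((u₀ y) ^ 2 - u₀ y))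
        ((4 * S / r) * (↑2 * u₀ x ^ 1 * p x - p x)) x :=
      (((huD x).pow 2).sub (huD x)).const_mul _
    have hwD := hwa.exp
    have hAD := ((hpD x).mul (hdh1 x).hasDerivAt).sub ((hp2D x).mul (hdh x).hasDerivAt)
    have htot := hwD.mul hAD
    refine htot.congr_deriv ?_
    have hLx := hL x
    simp only [Lop, deriv_fpoly] at hLx
    simp only [w, Pi.mul_apply, Pi.sub_apply]
    push_cast
    linear_combination ((Real.exp ((4 * S / r) * ((u₀ x) ^ 2 - u₀ x)) * p x)) * hLx
  have hWd : Differentiable ℝ W := fun x => (hWD x).differentiableAt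
  have hWmono : Monotone W := monotone_of_deriv_nonneg hWd (fun x => by
    rw [(hWD x).deriv]; positivity)
  -- W tends to 0 at both ends
  have hM0 : 0 ≤ M := le_trans (abs_nonneg _) (hM 0)
  have hM'0 : 0 ≤ M' := le_trans (abs_nonneg _) (hM' 0)
  have hwle : ∀ x, w x ≤ 1 := by
    intro x
    have h1' := (hbound x).1
    have h2' := (hbound x).2
    have hneg : (u₀ x) ^ 2 - u₀ x < 0 := by nlinarith
    have hcpos : 0 < 4 * S / r := by positivity
    have := mul_pos hcpos (neg_pos.mpr hneg)
    simp only [hwdef]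
    rw [Real.exp_le_one_iff]
    nlinarith
  have hAlim : ∀ (l : Filter ℝ), Tendsto p l (𝓝 0) → Tendsto p2 l (𝓝 0) →
      Tendsto A l (𝓝 0) := by
    intro l hpl hp2l
    have h1' : Tendsto (fun x => p x * h1 x) l (𝓝 0) := by
      apply squeeze_zero_norm (a := fun x => |p x| * M')
      · intro x
        rw [Real.norm_eq_abs, abs_mul]
        exact mul_le_mul_of_nonneg_left (hM' x) (abs_nonneg _)
      · have := hpl.abs.mul_const M'
        simpa using this
    have h2' : Tendsto (fun x => p2 x * h x) l (𝓝 0) := by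
      apply squeeze_zero_norm (a := fun x => |p2 x| * M)
      · intro x
        rw [Real.norm_eq_abs, abs_mul]
        exact mul_le_mul_of_nonneg_left (hM x) (abs_nonneg _)
      · have := hp2l.abs.mul_const M
        simpa using this
    have := h1'.sub h2'
    simpa using this
  have hWlim : ∀ (l : Filter ℝ), Tendsto A l (𝓝 0) → Tendsto W l (𝓝 0) := by
    intro l hAl
    apply squeeze_zero_norm (a := fun x => ‖A x‖)
    · intro x
      rw [hWdef]
      simp only [Real.norm_eq_abs, abs_mul]
      have hw0 : 0 < w x := Real.exp_pos _
      rw [abs_of_pos hw0]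
      calc w x * |A x| ≤ 1 * |A x| :=
            mul_le_mul_of_nonneg_right (hwle x) (abs_nonneg _)
        _ = |A x| := one_mul _
    · simpa using hAl.norm
  have hWtop : Tendsto W atTop (𝓝 0) := hWlim _ (hAlim _ htop hp2top)
  have hWbot : Tendsto W atBot (𝓝 0) := hWlim _ (hAlim _ hbot hp2bot)
  have hWle : ∀ x, W x ≤ 0 := fun x => hWmono.ge_of_tendsto hWtop x
  have hWge : ∀ x, 0 ≤ W x := fun x => hWmono.le_of_tendsto hWbot x
  have hW0 : W = fun _ => (0 : ℝ) := funext fun x => le_antisymm (hWle x) (hWge x)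
  -- contradiction: pick a point where p < 0
  obtain ⟨c, hc, hcs⟩ := exists_deriv_eq_slope u₀ (zero_lt_one)
    (hdu.continuous.continuousOn) (hdu.differentiableOn)
  have hneg : p c < 0 := by
    rw [hp, hcs]
    have := hmono (zero_lt_one (α := ℝ))
    have h10 : u₀ 1 - u₀ 0 < 0 := by linarith
    have : (u₀ 1 - u₀ 0) / (1 - 0) < 0 := by
      apply div_neg_of_neg_of_pos h10; norm_num
    simpa using this
  have hderiv0 : deriv W c = w c * (p c) ^ 2 := (hWD c).deriv
  rw [hW0] at hderiv0
  simp only [deriv_const] at hderiv0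
  have hw0 : 0 < w c := Real.exp_pos _
  have hpc2 : 0 < (p c) ^ 2 := by nlinarith
  nlinarith [mul_pos hw0 hpc2]
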